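/- Let F_1,…,F_n ∈ AP. There exist Q_1,…,Q_n ∈ AP with Σ_{j=1}^n Q_j·F_j = 1 identically on ℝ if and only if there exists δ > 0 such that Σ_{j=1}^n |F_j(t)| ≥ δ for all t ∈ ℝ. -/

import Mathlib

open Complex MeasureTheory Filter Topology

noncomputable section

/-- The set of generalized trigonometric polynomials, viewed as bounded continuous functions. -/
def trigPoly : Set (BoundedContinuousFunction ℝ ℂ) :=
  {f | ∃ (N : ℕ) (a : Fin N → ℂ) (lam : Fin N → ℝ),
    ∀ t : ℝ, f t = ∑ j, a j * Complex.exp (Complex.I * lam j * t)}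

/-- The almost periodic functions: the sup-norm closure of the trigonometric polynomials. -/
def AP : Set (BoundedContinuousFunction ℝ ℂ) := closure trigPoly

/-- `fourierBohrAt f lam c` says that the Fourier–Bohr coefficient of `f` at `lam` exists
and equals `c`. -/
def fourierBohrAt (f : BoundedContinuousFunction ℝ ℂ) (lam : ℝ) (c : ℂ) : Prop :=
  Filter.Tendsto
    (fun T : ℝ => ((1 / (2 * T) : ℝ) : ℂ) *
      ∫ t in (-T)..T, f t * Complex.exp (-Complex.I * lam * t))
    Filter.atTop (nhds c)

/-- The Bohr spectrum of `f`. -/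
def bohrSpectrum (f : BoundedContinuousFunction ℝ ℂ) : Set ℝ :=
  {lam | ∃ c : ℂ, c ≠ 0 ∧ fourierBohrAt f lam c}

/-- `APin Λ` is the algebra `AP_Λ` of almost periodic functions with Bohr spectrum in `Λ`. -/
def APin (Λ : Set ℝ) : Set (BoundedContinuousFunction ℝ ℂ) :=
  {f | f ∈ AP ∧ bohrSpectrum f ⊆ Λ}

def charB (l : ℝ) : BoundedContinuousFunction ℝ ℂ :=
  BoundedContinuousFunction.mkOfBound
    ⟨fun t => Complex.exp (Complex.I * l * t), by continuity⟩ 2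
    (fun x y => by
      have h : ∀ t : ℝ, ‖Complex.exp (Complex.I * l * t)‖ = 1 := fun t => by
        simp [Complex.norm_exp]
      calc dist (Complex.exp (Complex.I * l * x)) (Complex.exp (Complex.I * l * y))
          ≤ ‖Complex.exp (Complex.I * l * x)‖ + ‖Complex.exp (Complex.I * l * y)‖ :=
            dist_le_norm_add_norm _ _
        _ = 2 := by rw [h, h]; norm_num)

lemma charB_apply (l : ℝ) (t : ℝ) : charB l t = Complex.exp (Complex.I * l * t) := rfl

lemma charB_mul (a b : ℝ) : charB a * charB b = charB (a + b) := by
  ext t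
  simp only [BoundedContinuousFunction.coe_mul, Pi.mul_apply, charB_apply, ← Complex.exp_add]
  congr 1
  push_cast
  ring

lemma charB_zero : charB 0 = 1 := by
  ext t
  simp [charB_apply]




def charMonoid : Submonoid (BoundedContinuousFunction ℝ ℂ) where
  carrier := Set.range charB
  one_mem' := ⟨0, charB_zero⟩
  mul_mem' := by rintro _ _ ⟨a, rfl⟩ ⟨b, rfl⟩; exact ⟨a + b, (charB_mul a b).symm⟩

lemma trigPoly_eq_span :
    trigPoly = ↑(Submodule.span ℂ (Set.range charB)) := by
  ext f
  constructor
  · rintro ⟨N, a, lam, h⟩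
    rw [SetLike.mem_coe, Submodule.mem_span_set']
    refine ⟨N, a, fun j => ⟨charB (lam j), ⟨lam j, rfl⟩⟩, ?_⟩
    ext t
    rw [BoundedContinuousFunction.coe_sum, Finset.sum_apply, h t]
    simp [charB_apply, smul_eq_mul]
  · intro hf
    rw [SetLike.mem_coe, Submodule.mem_span_set'] at hf
    obtain ⟨N, a, g, hsum⟩ := hf
    choose lam hlam using fun j => (g j).2
    refine ⟨N, a, lam, fun t => ?_⟩
    rw [← hsum]
    rw [BoundedContinuousFunction.coe_sum, Finset.sum_apply]
    refine Finset.sum_congr rfl fun j _ => ?_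
    rw [← hlam j]
    simp [charB_apply, smul_eq_mul]

def APalg : Subalgebra ℂ (BoundedContinuousFunction ℝ ℂ) :=
  (Algebra.adjoin ℂ (Set.range charB)).topologicalClosure

lemma AP_eq : AP = ↑APalg := by
  have h1 : (Algebra.adjoin ℂ (Set.range charB) : Set (BoundedContinuousFunction ℝ ℂ))
      = trigPoly := by
    rw [trigPoly_eq_span]
    have : Submonoid.closure (Set.range charB) = charMonoid :=
      Submonoid.closure_eq charMonoid
    have h2 := Algebra.adjoin_eq_span ℂ (Set.range charB)
    have : (Algebra.adjoin ℂ (Set.range charB)).toSubmodule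
        = Submodule.span ℂ (Set.range charB) := by
      rw [h2, this]; rfl
    exact congrArg SetLike.coe this
  show AP = (APalg : Set _)
  rw [AP, ← h1]
  rfl

lemma star_trigPoly {f : BoundedContinuousFunction ℝ ℂ} (hf : f ∈ trigPoly) :
    star f ∈ trigPoly := by
  obtain ⟨N, a, lam, h⟩ := hf
  refine ⟨N, fun j => starRingEnd ℂ (a j), fun j => -(lam j), fun t => ?_⟩
  have : (star f) t = starRingEnd ℂ (f t) := rfl
  rw [this, h t, map_sum]
  refine Finset.sum_congr rfl fun j _ => ?_
  rw [map_mul, ← Complex.exp_conj]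
  congr 1
  simp [map_mul, Complex.conj_I]

lemma star_mem_AP {f : BoundedContinuousFunction ℝ ℂ} (hf : f ∈ AP) : star f ∈ AP := by
  have h1 : star f ∈ star '' AP := ⟨f, hf, rfl⟩
  have h2 : star '' AP ⊆ closure (star '' trigPoly) :=
    (image_closure_subset_closure_image continuous_star : star '' closure trigPoly ⊆ _)
  have h3 : star '' trigPoly ⊆ trigPoly := by
    rintro g ⟨h, hh, rfl⟩
    exact star_trigPoly hh
  exact closure_mono h3 (h2 h1)

/-- The corona theorem for `AP`: `(F_1,…,F_n)` admits a Bézout equation in `AP` iff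
`Σ |F_j|` is bounded away from zero. -/
theorem corona_AP (n : ℕ) (F : Fin n → BoundedContinuousFunction ℝ ℂ)
    (hF : ∀ j, F j ∈ AP) :
    (∃ Q : Fin n → BoundedContinuousFunction ℝ ℂ, (∀ j, Q j ∈ AP) ∧
        ∀ t : ℝ, ∑ j, Q j t * F j t = 1) ↔
      (∃ δ > 0, ∀ t : ℝ, δ ≤ ∑ j, ‖F j t‖) := by
  constructor
  · rintro ⟨Q, hQ, hBez⟩
    set C : ℝ := ∑ j, ‖Q j‖ with hCdef
    have hC0 : 0 ≤ C := Finset.sum_nonneg fun j _ => norm_nonneg _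
    refine ⟨1 / (C + 1), by positivity, fun t => ?_⟩
    have h1 : (1:ℝ) = ‖∑ j, Q j t * F j t‖ := by rw [hBez t]; simp
    have h2 : ‖∑ j, Q j t * F j t‖ ≤ ∑ j, ‖Q j t‖ * ‖F j t‖ := by
      refine (norm_sum_le _ _).trans (le_of_eq ?_)
      exact Finset.sum_congr rfl fun j _ => norm_mul _ _
    have h3 : ∑ j, ‖Q j t‖ * ‖F j t‖ ≤ (C + 1) * ∑ j, ‖F j t‖ := by
      rw [Finset.mul_sum]
      refine Finset.sum_le_sum fun j _ => ?_
      refine mul_le_mul_of_nonneg_right ?_ (norm_nonneg _)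
      calc ‖Q j t‖ ≤ ‖Q j‖ := BoundedContinuousFunction.norm_coe_le_norm _ _
        _ ≤ C := Finset.single_le_sum (fun j _ => norm_nonneg (Q j)) (Finset.mem_univ j)
        _ ≤ C + 1 := by linarith
    rw [div_le_iff₀ (by positivity)]
    nlinarith [h1, h2, h3]
  · rintro ⟨δ, hδ, hlow⟩
    have hn : 0 < n := by
      rcases Nat.eq_zero_or_pos n with h | h
      · subst h
        have := hlow 0
        simp at this
        linarith
      · exact h
    set g : ℝ → ℝ := fun t => ∑ j, ‖F j t‖ ^ 2 with hgdef
    set c : ℝ := δ ^ 2 / n with hcdef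
    have hc0 : 0 < c := by positivity
    have hgc : ∀ t, c ≤ g t := by
      intro t
      have h1 : (∑ j, ‖F j t‖) ^ 2 ≤ (Finset.univ : Finset (Fin n)).card * ∑ j, ‖F j t‖ ^ 2 :=
        sq_sum_le_card_mul_sum_sq
      have h2 : δ ^ 2 ≤ (∑ j, ‖F j t‖) ^ 2 := by nlinarith [hlow t]
      rw [hcdef, div_le_iff₀ (by exact_mod_cast hn)]
      simp only [Finset.card_univ, Fintype.card_fin] at h1
      calc δ ^ 2 ≤ (∑ j, ‖F j t‖) ^ 2 := h2
        _ ≤ n * ∑ j, ‖F j t‖ ^ 2 := by exact_mod_cast h1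
        _ = g t * n := by rw [mul_comm]
    set G : BoundedContinuousFunction ℝ ℂ := ∑ j, star (F j) * F j with hGdef
    have hGt : ∀ t, G t = ((g t : ℝ) : ℂ) := by
      intro t
      rw [hGdef, BoundedContinuousFunction.coe_sum, Finset.sum_apply, hgdef]
      push_cast
      refine Finset.sum_congr rfl fun j _ => ?_
      have h : (star (F j) * F j) t = starRingEnd ℂ (F j t) * F j t := rfl
      rw [h, mul_comm, Complex.mul_conj, Complex.normSq_eq_norm_sq]
      push_cast
      ring
    have hFA : ∀ j, F j ∈ APalg := fun j => by
      have := hF j; rwa [AP_eq] at this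
    have hGmem : G ∈ APalg := by
      refine Subalgebra.sum_mem _ fun j _ => Subalgebra.mul_mem _ ?_ (hFA j)
      have := star_mem_AP (hF j); rwa [AP_eq] at this
    have hGne : ∀ t, G t ≠ 0 := by
      intro t
      rw [hGt t]
      exact_mod_cast ne_of_gt (lt_of_lt_of_le hc0 (hgc t))
    set Cu : ℝ := ‖G‖ + 1 with hCudef
    have hnormGt : ∀ t, ‖G t‖ = g t := by
      intro t
      rw [hGt t, Complex.norm_real, Real.norm_eq_abs,
        _root_.abs_of_nonneg (le_trans hc0.le (hgc t))]
    have hgCu : ∀ t, g t ≤ Cu := by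
      intro t
      have h1 : ‖G t‖ ≤ ‖G‖ := BoundedContinuousFunction.norm_coe_le_norm _ _
      rw [hnormGt t] at h1
      rw [hCudef]; linarith
    have hcCu : c ≤ Cu := le_trans (hgc 0) (hgCu 0)
    set s : ℝ := 2 / (c + Cu) with hsdef
    have hs0 : 0 < s := by
      rw [hsdef]; positivity
    set r : ℝ := (Cu - c) / (Cu + c) with hrdef
    have hr0 : 0 ≤ r := by
      rw [hrdef]
      apply div_nonneg <;> linarith
    have hr1 : r < 1 := by
      rw [hrdef, div_lt_one (by linarith)]
      linarith
    have hkey : ∀ x : ℝ, c ≤ x → x ≤ Cu → |1 - s * x| ≤ r := by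
      intro x hx1 hx2
      have hden : 0 < c + Cu := by linarith
      have heq : 1 - s * x = ((c + Cu) - 2 * x) / (c + Cu) := by
        rw [hsdef]; field_simp
      rw [heq, abs_div, abs_of_pos hden, hrdef, div_le_div_iff₀ hden (by linarith)]
      have habs : |c + Cu - 2 * x| ≤ Cu - c := by
        rw [abs_le]; constructor <;> linarith
      nlinarith [habs, abs_nonneg (c + Cu - 2 * x)]
    have hnormGinv : ∀ t, ‖(G t)⁻¹‖ ≤ 1 / c := by
      intro t
      rw [norm_inv, one_div, hnormGt t]
      exact inv_anti₀ hc0 (hgc t)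
    set H : BoundedContinuousFunction ℝ ℂ :=
      BoundedContinuousFunction.mkOfBound
        ⟨fun t => (G t)⁻¹, (map_continuous G).inv₀ hGne⟩ (2 / c)
        (fun x y => by
          refine (dist_le_norm_add_norm _ _).trans ?_
          have h1 := hnormGinv x
          have h2 := hnormGinv y
          simp only [ContinuousMap.coe_mk]
          have : 2 / c = 1 / c + 1 / c := by ring
          rw [this]
          exact add_le_add h1 h2) with hHdef
    have hHt : ∀ t, H t = (G t)⁻¹ := fun t => rfl
    set P : ℕ → BoundedContinuousFunction ℝ ℂ :=
      fun K => (s : ℂ) • ∑ k ∈ Finset.range K, (1 - (s : ℂ) • G) ^ k with hPdef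
    have hPmem : ∀ K, P K ∈ APalg := by
      intro K
      refine Subalgebra.smul_mem _ (Subalgebra.sum_mem _ fun k _ => Subalgebra.pow_mem _ ?_ _) _
      exact Subalgebra.sub_mem _ (Subalgebra.one_mem _) (Subalgebra.smul_mem _ hGmem _)
    have hsne : (s : ℂ) ≠ 0 := by exact_mod_cast ne_of_gt hs0
    have hPbound : ∀ K t, ‖P K t - H t‖ ≤ r ^ K / c := by
      intro K t
      have hx1 := hgc t
      have hx2 := hgCu t
      have hzx : G t = ((g t : ℝ) : ℂ) := hGt t
      have hzne : G t ≠ 0 := hGne t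
      set w : ℂ := 1 - (s : ℂ) * G t with hw
      have hwne : w ≠ 1 := by
        rw [hw]
        intro hcon
        have hz0 : (s : ℂ) * G t = 0 := by linear_combination -hcon
        rcases mul_eq_zero.1 hz0 with h | h
        · exact hsne h
        · exact hzne h
      have hPt : P K t = (s : ℂ) * ∑ k ∈ Finset.range K, w ^ k := by
        rw [hPdef]
        simp only [BoundedContinuousFunction.coe_smul, Pi.smul_apply, smul_eq_mul]
        congr 1
        rw [BoundedContinuousFunction.coe_sum, Finset.sum_apply]
        refine Finset.sum_congr rfl fun k _ => ?_
        simp only [BoundedContinuousFunction.coe_pow, Pi.pow_apply,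
          BoundedContinuousFunction.coe_sub, Pi.sub_apply,
          BoundedContinuousFunction.coe_one, Pi.one_apply,
          BoundedContinuousFunction.coe_smul, Pi.smul_apply, smul_eq_mul, hw]
      have hdiff : P K t - H t = -(w ^ K) / G t := by
        rw [hPt, hHt, geom_sum_eq hwne K]
        have hw1 : w - 1 = -((s : ℂ) * G t) := by rw [hw]; ring
        rw [hw1]
        field_simp
        ring
      rw [hdiff, norm_div, norm_neg, norm_pow]
      have hwr : ‖w‖ ≤ r := by
        rw [hw, hzx]
        have hcast : (1 : ℂ) - (s : ℂ) * ((g t : ℝ) : ℂ) = ((1 - s * g t : ℝ) : ℂ) := by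
          push_cast; ring
        rw [hcast, Complex.norm_real, Real.norm_eq_abs]
        exact hkey (g t) hx1 hx2
      have hcz : c ≤ ‖G t‖ := by rw [hnormGt t]; exact hgc t
      exact div_le_div₀ (pow_nonneg hr0 K) (pow_le_pow_left₀ (norm_nonneg w) hwr K) hc0 hcz
    have hnorm : ∀ K, ‖P K - H‖ ≤ r ^ K / c := by
      intro K
      refine (BoundedContinuousFunction.norm_le (by positivity)).2 fun t => ?_
      have h : (P K - H) t = P K t - H t := rfl
      rw [h]
      exact hPbound K t
    have htend : Tendsto P atTop (nhds H) := by
      rw [tendsto_iff_norm_sub_tendsto_zero]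
      have hlim : Tendsto (fun K : ℕ => r ^ K / c) atTop (nhds 0) := by
        have := (tendsto_pow_atTop_nhds_zero_of_lt_one hr0 hr1).div_const c
        simpa using this
      exact squeeze_zero (fun K => norm_nonneg _) hnorm hlim
    have hHmem : H ∈ APalg := by
      have hclosed : IsClosed (APalg : Set (BoundedContinuousFunction ℝ ℂ)) :=
        Subalgebra.isClosed_topologicalClosure _
      exact hclosed.mem_of_tendsto htend (Filter.Eventually.of_forall hPmem)
    refine ⟨fun j => star (F j) * H, fun j => ?_, fun t => ?_⟩
    · rw [AP_eq]
      refine Subalgebra.mul_mem _ ?_ hHmem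
      have := star_mem_AP (hF j); rwa [AP_eq] at this
    · have hre : ∑ j, (star (F j) * H) t * F j t = (∑ j, (star (F j)) t * F j t) * H t := by
        rw [Finset.sum_mul]
        refine Finset.sum_congr rfl fun j _ => ?_
        have h : (star (F j) * H) t = (star (F j)) t * H t := rfl
        rw [h]; ring
      rw [hre]
      have hsum : ∑ j, (star (F j)) t * F j t = G t := by
        rw [hGdef, BoundedContinuousFunction.coe_sum, Finset.sum_apply]
        rfl
      rw [hsum, hHt, mul_inv_cancel₀ (hGne t)]
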